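/- Let H₁, H₂ be nonzero complex Hilbert spaces and let T ∈ B(H₂, H₁) with ‖T‖ ≤ 1. Let S = π_{(H₁,H₂,T)}(T₂) ⊆ B(H₁ × H₂), the range of the representation π_{(H₁,H₂,T)}. Then S'' = S if and only if T is not bijective. (Since S is a finite-dimensional, hence weak*-closed, subspace of B(H₁ × H₂), this says exactly that π_{(H₁,H₂,T)} has the double commutant property if and only if T is not invertible.) -/

import Mathlib

noncomputable section

open Filter

open scoped ENNReal

/-- The operator `(ζ, η) ↦ (a • ζ + b • (T η), c • η)` on `H₁ × H₂`. -/
def blockOp {H₁ H₂ : Type} [NormedAddCommGroup H₁] [InnerProductSpace ℂ H₁]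
    [NormedAddCommGroup H₂] [InnerProductSpace ℂ H₂]
    (T : H₂ →L[ℂ] H₁) (a b c : ℂ) : (H₁ × H₂) →L[ℂ] (H₁ × H₂) :=
  (a • ContinuousLinearMap.fst ℂ H₁ H₂ +
    b • T.comp (ContinuousLinearMap.snd ℂ H₁ H₂)).prod
    (c • ContinuousLinearMap.snd ℂ H₁ H₂)

open ContinuousLinearMap

lemma blockOp_apply' {H₁ H₂ : Type} [NormedAddCommGroup H₁] [InnerProductSpace ℂ H₁]
    [NormedAddCommGroup H₂] [InnerProductSpace ℂ H₂]
    (T : H₂ →L[ℂ] H₁) (a b c : ℂ) (p : H₁ × H₂) :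
    blockOp T a b c p = (a • p.1 + b • T p.2, c • p.2) := rfl

lemma exists_inner_one {H : Type} [NormedAddCommGroup H] [InnerProductSpace ℂ H]
    {w : H} (hw : w ≠ 0) : ∃ ω : H, (inner ℂ ω w : ℂ) = 1 := by
  refine ⟨((‖w‖ : ℂ) ^ 2)⁻¹ • w, ?_⟩
  rw [inner_smul_left, inner_self_eq_norm_sq_to_K, map_inv₀, map_pow, Complex.conj_ofReal]
  have : ((‖w‖ : ℂ) ^ 2) ≠ 0 := pow_ne_zero _ (by simpa using hw)
  field_simp
  exact div_self this

lemma diag_mem_centralizer {H₁ H₂ : Type} [NormedAddCommGroup H₁] [InnerProductSpace ℂ H₁]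
    [NormedAddCommGroup H₂] [InnerProductSpace ℂ H₂]
    (T : H₂ →L[ℂ] H₁) (A : H₁ →L[ℂ] H₁) (B : H₂ →L[ℂ] H₂)
    (h : ∀ η, A (T η) = T (B η)) :
    (A.comp (fst ℂ H₁ H₂)).prod (B.comp (snd ℂ H₁ H₂)) ∈
      Set.centralizer {x : (H₁ × H₂) →L[ℂ] (H₁ × H₂) | ∃ a b c : ℂ, x = blockOp T a b c} := by
  rintro s ⟨a, b, c, rfl⟩
  refine ContinuousLinearMap.ext fun p => ?_
  simp only [mul_apply_eq_comp, blockOp_apply', prod_apply, coe_comp', Function.comp_apply,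
    coe_fst', coe_snd', map_add, map_smul, h]

/-- For nonzero Hilbert spaces `H₁, H₂` and a contraction `T : H₂ → H₁`, the range `S` of
the representation `π_(H₁,H₂,T)` of the upper triangular `2 × 2` matrices on `H₁ ⊕ H₂`
satisfies `S'' = S` if and only if `T` is not invertible. -/
theorem blockRep_double_commutant_iff
    (H₁ : Type) [NormedAddCommGroup H₁] [InnerProductSpace ℂ H₁] [CompleteSpace H₁] (H₂ : Type) [NormedAddCommGroup H₂] [InnerProductSpace ℂ H₂] [CompleteSpace H₂]
    [Nontrivial H₁] [Nontrivial H₂]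
    (T : H₂ →L[ℂ] H₁) (hT : ‖T‖ ≤ 1) :
    (Set.centralizer (Set.centralizer
        {x : (H₁ × H₂) →L[ℂ] (H₁ × H₂) | ∃ a b c : ℂ, x = blockOp T a b c})
      = {x : (H₁ × H₂) →L[ℂ] (H₁ × H₂) | ∃ a b c : ℂ, x = blockOp T a b c})
    ↔ ¬Function.Bijective ⇑T := by
  constructor
  · -- If S'' = S then T is not bijective.
    intro hEq hbij
    have hker : LinearMap.ker (T : H₂ →ₗ[ℂ] H₁) = ⊥ := LinearMap.ker_eq_bot.2 hbij.injective
    have hrange : LinearMap.range (T : H₂ →ₗ[ℂ] H₁) = ⊤ := LinearMap.range_eq_top.2 hbij.surjective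
    let e : H₂ ≃L[ℂ] H₁ := ContinuousLinearEquiv.ofBijective T hker hrange
    have he : ∀ η, e η = T η := fun _ => rfl
    set E' : (H₁ × H₂) →L[ℂ] (H₁ × H₂) :=
      (0 : (H₁ × H₂) →L[ℂ] H₁).prod
        ((e.symm : H₁ →L[ℂ] H₂).comp (fst ℂ H₁ H₂)) with hE'
    have hE'app : ∀ p : H₁ × H₂, E' p = (0, e.symm p.1) := fun p => rfl
    have hE'mem : E' ∈ Set.centralizer (Set.centralizer
        {x : (H₁ × H₂) →L[ℂ] (H₁ × H₂) | ∃ a b c : ℂ, x = blockOp T a b c}) := by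
      intro y hy
      have h1 := hy (blockOp T 1 0 0) ⟨1, 0, 0, rfl⟩
      have h2 := hy (blockOp T 0 0 1) ⟨0, 0, 1, rfl⟩
      have h3 := hy (blockOp T 0 1 0) ⟨0, 1, 0, rfl⟩
      have h1' : ∀ p : H₁ × H₂, ((y p).1, (0 : H₂)) = y (p.1, 0) := by
        intro p
        have := ContinuousLinearMap.ext_iff.1 h1 p
        simpa [mul_apply_eq_comp, blockOp_apply'] using this
      have h2' : ∀ p : H₁ × H₂, ((0 : H₁), (y p).2) = y (0, p.2) := by
        intro p
        have := ContinuousLinearMap.ext_iff.1 h2 p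
        simpa [mul_apply_eq_comp, blockOp_apply'] using this
      have h3' : ∀ p : H₁ × H₂, (T (y p).2, (0 : H₂)) = y (T p.2, 0) := by
        intro p
        have := ContinuousLinearMap.ext_iff.1 h3 p
        simpa [mul_apply_eq_comp, blockOp_apply'] using this
      have hAT : ∀ η : H₂, (y ((T η : H₁), (0:H₂))).1 = T ((y ((0:H₁), η)).2) := by
        intro η
        have h := (h3' ((0 : H₁), η)).symm
        exact congrArg Prod.fst h
      refine ContinuousLinearMap.ext fun p => ?_
      have lhs : (y * E') p = (0, (y ((0:H₁), e.symm p.1)).2) := by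
        rw [mul_apply_eq_comp, hE'app]
        exact (h2' ((0:H₁), e.symm p.1)).symm
      have rhs : (E' * y) p = (0, e.symm (y p).1) := by rw [mul_apply_eq_comp, hE'app]
      rw [lhs, rhs]
      have h5 : (y p).1 = (y (p.1, (0:H₂))).1 := by rw [← h1' p]
      have h6 : (y (p.1, (0:H₂))).1 = T ((y ((0:H₁), e.symm p.1)).2) := by
        have := hAT (e.symm p.1)
        rwa [show T (e.symm p.1) = p.1 from e.apply_symm_apply p.1] at this
      rw [h5, h6]
      congr 1
      rw [show T ((y ((0:H₁), e.symm p.1)).2) = e ((y ((0:H₁), e.symm p.1)).2) from rfl,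
        e.symm_apply_apply]
    rw [hEq] at hE'mem
    obtain ⟨a, b, c, habc⟩ := hE'mem
    obtain ⟨ζ₀, hζ₀⟩ := exists_ne (0 : H₁)
    have hzz := ContinuousLinearMap.ext_iff.1 habc (ζ₀, (0 : H₂))
    rw [hE'app, blockOp_apply'] at hzz
    have h2 : e.symm ζ₀ = 0 := by
      have := congrArg Prod.snd hzz
      simpa using this
    have : ζ₀ = 0 := by
      have := congrArg e h2
      simpa [e.apply_symm_apply] using this
    exact hζ₀ this
  · -- If T is not bijective then S'' = S.
    intro hbij
    refine Set.Subset.antisymm ?_ Set.subset_centralizer_centralizer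
    intro x hx
    have key : ∀ (A : H₁ →L[ℂ] H₁) (B : H₂ →L[ℂ] H₂), (∀ η, A (T η) = T (B η)) →
        (∀ v : H₁, x (A v, 0) = (A ((x (v, 0)).1), B ((x (v, 0)).2))) ∧
        (∀ η : H₂, x (0, B η) = (A ((x (0, η)).1), B ((x (0, η)).2))) := by
      intro A B h
      have hcomm := hx _ (diag_mem_centralizer T A B h)
      constructor
      · intro v
        have h1 := ContinuousLinearMap.ext_iff.1 hcomm (v, (0 : H₂))
        simp only [mul_apply_eq_comp, prod_apply, coe_comp', Function.comp_apply, coe_fst', coe_snd',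
          map_zero] at h1
        exact h1.symm
      · intro η
        have h1 := ContinuousLinearMap.ext_iff.1 hcomm ((0 : H₁), η)
        simp only [mul_apply_eq_comp, prod_apply, coe_comp', Function.comp_apply, coe_fst', coe_snd',
          map_zero] at h1
        exact h1.symm
    have hxsm1 : ∀ (s : ℂ) (u : H₁), x (s • u, 0) = s • x (u, 0) := by
      intro s u
      rw [show ((s • u, (0 : H₂)) : H₁ × H₂) = s • ((u, 0) : H₁ × H₂) by simp, map_smul]
    have hxsm2 : ∀ (s : ℂ) (η : H₂), x ((0 : H₁), s • η) = s • x (0, η) := by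
      intro s η
      rw [show (((0:H₁), s • η) : H₁ × H₂) = s • (((0:H₁), η) : H₁ × H₂) by simp, map_smul]
    by_cases hT0 : T = 0
    · -- T = 0 case
      obtain ⟨v₀, hv₀⟩ := exists_ne (0 : H₁)
      obtain ⟨η₀, hη₀⟩ := exists_ne (0 : H₂)
      obtain ⟨ω₀, hω₀⟩ := exists_inner_one hv₀
      obtain ⟨ζ₀, hζ₀⟩ := exists_inner_one hη₀
      have hx10 : ∀ u : H₁, x (u, 0) = ((inner ℂ ω₀ ((x (v₀, 0)).1) : ℂ) • u, 0) := by
        intro u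
        have h := (key ((innerSL ℂ ω₀).smulRight u) 0 (fun η => by simp [hT0])).1 v₀
        simp only [smulRight_apply, innerSL_apply_apply, zero_apply] at h
        rwa [hω₀, one_smul] at h
      have hx20 : ∀ ξ : H₂, x (0, ξ) = (0, (inner ℂ ζ₀ ((x (0, η₀)).2) : ℂ) • ξ) := by
        intro ξ
        have h := (key 0 ((innerSL ℂ ζ₀).smulRight ξ) (fun η => by simp [hT0])).2 η₀
        simp only [smulRight_apply, innerSL_apply_apply, zero_apply] at h
        rwa [hζ₀, one_smul] at h
      refine ⟨inner ℂ ω₀ ((x (v₀, 0)).1), 0, inner ℂ ζ₀ ((x (0, η₀)).2),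
        ContinuousLinearMap.ext fun p => ?_⟩
      have hp : x p = x (p.1, 0) + x (0, p.2) := by
        rw [← map_add]; congr 1; simp
      rw [hp, hx10 p.1, hx20 p.2, blockOp_apply']
      simp [Prod.ext_iff]
    · -- T ≠ 0 case
      obtain ⟨η₀, hTη₀⟩ : ∃ η, T η ≠ 0 := by
        by_contra h; push_neg at h
        exact hT0 (ContinuousLinearMap.ext fun η => by simpa using h η)
      obtain ⟨ω₀, hω₀⟩ := exists_inner_one hTη₀
      obtain ⟨v₀, hv₀⟩ := exists_ne (0 : H₁)
      obtain ⟨ω₁, hω₁⟩ := exists_inner_one hv₀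
      have hη₀ : η₀ ≠ 0 := fun h => hTη₀ (by rw [h, map_zero])
      have E1 : ∀ (ω : H₁) (ζ : H₂) (v : H₁),
          (inner ℂ ω v : ℂ) • x (T ζ, 0) =
            ((inner ℂ ω ((x (v, 0)).1) : ℂ) • T ζ, (inner ℂ ω (T ((x (v, 0)).2)) : ℂ) • ζ) := by
        intro ω ζ v
        have h := (key (T.comp ((innerSL ℂ ω).smulRight ζ)) (((innerSL ℂ ω).smulRight ζ).comp T)
            (fun η => rfl)).1 v
        simp only [coe_comp', Function.comp_apply, smulRight_apply, innerSL_apply_apply,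
          map_smul] at h
        rwa [hxsm1] at h
      have E2 : ∀ (ω : H₁) (ζ : H₂) (η : H₂),
          (inner ℂ ω (T η) : ℂ) • x (0, ζ) =
            ((inner ℂ ω ((x (0, η)).1) : ℂ) • T ζ, (inner ℂ ω (T ((x (0, η)).2)) : ℂ) • ζ) := by
        intro ω ζ η
        have h := (key (T.comp ((innerSL ℂ ω).smulRight ζ)) (((innerSL ℂ ω).smulRight ζ).comp T)
            (fun η => rfl)).2 η
        simp only [coe_comp', Function.comp_apply, smulRight_apply, innerSL_apply_apply,
          map_smul] at h
        rwa [hxsm2] at h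
      have hx2 : ∀ ζ : H₂, x (0, ζ) =
          ((inner ℂ ω₀ ((x (0, η₀)).1) : ℂ) • T ζ, (inner ℂ ω₀ (T ((x (0, η₀)).2)) : ℂ) • ζ) := by
        intro ζ
        have h := E2 ω₀ ζ η₀
        rwa [hω₀, one_smul] at h
      have hx11 : ∀ v : H₁, (x (v, 0)).1 = (inner ℂ ω₀ ((x (T η₀, 0)).1) : ℂ) • v := by
        intro v
        apply ext_inner_left ℂ
        intro ω
        have h := congrArg (fun z : H₁ × H₂ => (inner ℂ ω₀ z.1 : ℂ)) (E1 ω η₀ v)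
        simp only [Prod.smul_fst, inner_smul_right] at h
        rw [hω₀, mul_one] at h
        rw [inner_smul_right, ← h, mul_comm]
      have h21T : ∀ ζ : H₂, (x (T ζ, 0)).2 = (inner ℂ ω₁ (T ((x (v₀, 0)).2)) : ℂ) • ζ := by
        intro ζ
        have h := congrArg Prod.snd (E1 ω₁ ζ v₀)
        simp only [Prod.smul_snd] at h
        rwa [hω₁, one_smul] at h
      set μ : ℂ := inner ℂ ω₁ (T ((x (v₀, 0)).2)) with hμdef
      have hTx21 : ∀ v : H₁, T ((x (v, 0)).2) = μ • v := by
        intro v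
        apply ext_inner_left ℂ
        intro ω
        have h := congrArg Prod.snd (E1 ω η₀ v)
        simp only [Prod.smul_snd] at h
        rw [h21T η₀] at h
        rw [smul_smul] at h
        have := smul_left_injective ℂ hη₀ h
        rw [inner_smul_right, ← this, mul_comm]
      have hμ : μ = 0 := by
        by_contra hμ
        apply hbij
        constructor
        · intro u u' huu
          have h1 := h21T u
          have h2 := h21T u'
          rw [huu, h2] at h1
          exact smul_right_injective H₂ hμ h1.symm
        · intro v
          refine ⟨μ⁻¹ • (x (v, 0)).2, ?_⟩
          rw [map_smul, hTx21, smul_smul, inv_mul_cancel₀ hμ, one_smul]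
      have h21 : ∀ v : H₁, (x (v, 0)).2 = 0 := by
        by_cases hinj : Function.Injective ⇑T
        · intro v
          apply hinj
          rw [hTx21 v, hμ, zero_smul, map_zero]
        · obtain ⟨u, u', huu', hne⟩ := Function.not_injective_iff.1 hinj
          have hξ0 : u - u' ≠ 0 := sub_ne_zero.2 hne
          have hTξ : T (u - u') = 0 := by rw [map_sub, huu', sub_self]
          intro v
          have hp := (key 0 ((innerSL ℂ ((x (v, 0)).2)).smulRight (u - u'))
            (fun η => by simp [smulRight_apply, innerSL_apply_apply, map_smul, hTξ])).1 v
          simp only [zero_apply, map_zero, smulRight_apply, innerSL_apply_apply] at hp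
          have h0 : x ((0 : H₁), (0 : H₂)) = 0 := by
            rw [show (((0:H₁), (0:H₂)) : H₁ × H₂) = (0 : H₁ × H₂) from rfl, map_zero]
          rw [h0] at hp
          have h2 := congrArg Prod.snd hp
          simp only [Prod.snd_zero] at h2
          have h3 : (inner ℂ ((x (v, 0)).2) ((x (v, 0)).2) : ℂ) = 0 := by
            rcases smul_eq_zero.1 h2.symm with h | h
            · exact h
            · exact absurd h hξ0
          exact inner_self_eq_zero.1 h3
      refine ⟨inner ℂ ω₀ ((x (T η₀, 0)).1), inner ℂ ω₀ ((x (0, η₀)).1),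
        inner ℂ ω₀ (T ((x (0, η₀)).2)), ContinuousLinearMap.ext fun p => ?_⟩
      have hp : x p = x (p.1, 0) + x (0, p.2) := by
        rw [← map_add]; congr 1; simp
      have e1 : x (p.1, 0) = ((inner ℂ ω₀ ((x (T η₀, 0)).1) : ℂ) • p.1, (0 : H₂)) := by
        rw [Prod.ext_iff]; exact ⟨hx11 p.1, h21 p.1⟩
      rw [hp, e1, hx2 p.2, blockOp_apply']
      simp [Prod.ext_iff, add_comm]
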